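/- For every finite nonempty set I of positive integers, τ_I(TPrim) = Im(τ_I) ∩ TPrim. Moreover, TPrim is the internal direct sum, over all finite nonempty sets I of positive integers, of the subspaces Im(τ_I) ∩ TPrim. -/

import Mathlib

open scoped TensorProduct Classical

/-- The maximum letter of a word, with `wmax [] = 0`. -/
def wmax (w : List ℕ) : ℕ := w.foldr max 0

/-- A word over the positive integers is packed if every letter from `1` to its maximum
occurs in it. -/
def IsPacked (w : List ℕ) : Prop :=
  (∀ x ∈ w, 0 < x) ∧ ∀ i : ℕ, 0 < i → i ≤ wmax w → i ∈ w

/-- `pack w` replaces every occurrence of the `i`-th smallest distinct letter of `w` by `i`. -/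
def pack (w : List ℕ) : List ℕ :=
  w.map (fun a => (w.dedup.filter (fun b => b < a)).length + 1)

/-- The ambient free `ℚ`-vector space on all words. -/
abbrev V : Type := List ℕ →₀ ℚ

noncomputable instance : Zero (V ⊗[ℚ] V) :=
  (inferInstance : AddZeroClass (V ⊗[ℚ] V)).toZero

/-- The basis element `R_w`. -/
noncomputable def Rw (w : List ℕ) : V := Finsupp.single w 1

/-- `WQSym₊`: the span of the `R_w` over nonempty packed words `w`. -/
noncomputable def Wplus : Submodule ℚ V :=
  Submodule.span ℚ {x : V | ∃ w : List ℕ, IsPacked w ∧ w ≠ [] ∧ x = Rw w}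

/-- A valid cut for `Δ_≺` at position `i`: `1 ≤ i ≤ |w| - 1`, the letter sets of the two
factors are disjoint, and all occurrences of the maximum letter lie in the first `i`
positions. -/
def okL (w : List ℕ) (i : ℕ) : Prop :=
  1 ≤ i ∧ i < w.length ∧ (∀ a ∈ w.take i, a ∉ w.drop i) ∧ wmax w ∉ w.drop i

/-- A valid cut for `Δ_≻` at position `i`: `1 ≤ i ≤ |w| - 1`, the letter sets of the two
factors are disjoint, and all occurrences of the maximum letter lie in the last `n - i`
positions. -/
def okR (w : List ℕ) (i : ℕ) : Prop :=
  1 ≤ i ∧ i < w.length ∧ (∀ a ∈ w.take i, a ∉ w.drop i) ∧ wmax w ∉ w.take i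

noncomputable def cutsL (w : List ℕ) : V ⊗[ℚ] V :=
  ((((List.range w.length).filter (fun i => decide (okL w i))).map
    (fun i => Rw (pack (w.take i)) ⊗ₜ[ℚ] Rw (pack (w.drop i)))) : List (V ⊗[ℚ] V)).sum

noncomputable def cutsR (w : List ℕ) : V ⊗[ℚ] V :=
  ((((List.range w.length).filter (fun i => decide (okR w i))).map
    (fun i => Rw (pack (w.take i)) ⊗ₜ[ℚ] Rw (pack (w.drop i)))) : List (V ⊗[ℚ] V)).sum

/-- The left half-coproduct `Δ_≺` of `WQSym₊`. -/
noncomputable def deltaL : V →ₗ[ℚ] V ⊗[ℚ] V :=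
  Finsupp.lsum ℚ fun w => LinearMap.toSpanSingleton ℚ (V ⊗[ℚ] V) (cutsL w)

/-- The right half-coproduct `Δ_≻` of `WQSym₊`. -/
noncomputable def deltaR : V →ₗ[ℚ] V ⊗[ℚ] V :=
  Finsupp.lsum ℚ fun w => LinearMap.toSpanSingleton ℚ (V ⊗[ℚ] V) (cutsR w)

/-- The maximal letter of `w` occurs exactly at the (1-based) positions belonging to `I`. -/
def maxAt (w : List ℕ) (I : Finset ℕ) : Prop :=
  (∀ i ∈ I, 1 ≤ i ∧ i ≤ w.length) ∧
  ∀ j, j < w.length → (w.getD j 0 = wmax w ↔ j + 1 ∈ I)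

/-- The projector `τ_I`: on a basis element `R_w`, it is `R_w` when the maximal letter
of `w` occurs exactly at the positions of `I`, and `0` otherwise. -/
noncomputable def tauI (I : Finset ℕ) : V →ₗ[ℚ] V :=
  Finsupp.lsum ℚ fun w => LinearMap.toSpanSingleton ℚ V
    (if maxAt w I then Rw w else 0)

/-- The totally primitive elements of `WQSym₊`: `TPrim = Ker Δ_≺ ∩ Ker Δ_≻`. -/
noncomputable def TPrim : Submodule ℚ V :=
  Wplus ⊓ LinearMap.ker deltaL ⊓ LinearMap.ker deltaR

/-- The index type: finite nonempty sets of positive integers. -/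
def PosFinset : Type := {I : Finset ℕ // I.Nonempty ∧ ∀ i ∈ I, 0 < i}

-- basic list lemmas
section Basic
lemma le_wmax {a : ℕ} {w : List ℕ} (h : a ∈ w) : a ≤ wmax w := by
  induction w with
  | nil => cases h
  | cons b t ih =>
    rcases List.mem_cons.mp h with rfl | h
    · exact le_max_left _ _
    · exact le_trans (ih h) (le_max_right _ _)

lemma wmax_le {m : ℕ} {w : List ℕ} (h : ∀ a ∈ w, a ≤ m) : wmax w ≤ m := by
  induction w with
  | nil => exact Nat.zero_le m
  | cons b t ih =>
    exact max_le (h b List.mem_cons_self) (ih fun a ha => h a (List.mem_cons_of_mem _ ha))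

lemma wmax_mem {w : List ℕ} (h : w ≠ []) : wmax w ∈ w := by
  induction w with
  | nil => exact absurd rfl h
  | cons b t ih =>
    rcases eq_or_ne t [] with rfl | ht
    · simp [wmax]
    · rcases max_cases b (wmax t) with ⟨h1, _⟩ | ⟨h1, _⟩
      · simpa [wmax] using Or.inl h1
      · have := ih ht
        show b ⊔ wmax t ∈ b :: t
        rw [h1]
        exact List.mem_cons_of_mem _ this

lemma wmax_eq {m : ℕ} {w : List ℕ} (hm : m ∈ w) (h : ∀ a ∈ w, a ≤ m) : wmax w = m :=
  le_antisymm (wmax_le h) (le_wmax hm)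
end Basic
/-- The set of 1-based positions of the maximal letter. -/
noncomputable def maxSet (w : List ℕ) : Finset ℕ :=
  ((Finset.range w.length).filter (fun j => w.getD j 0 = wmax w)).image (· + 1)

lemma mem_maxSet {w : List ℕ} {i : ℕ} :
    i ∈ maxSet w ↔ ∃ j, j < w.length ∧ w.getD j 0 = wmax w ∧ i = j + 1 := by
  simp only [maxSet, Finset.mem_image, Finset.mem_filter, Finset.mem_range]
  constructor
  · rintro ⟨j, ⟨hj, hm⟩, rfl⟩; exact ⟨j, hj, hm, rfl⟩
  · rintro ⟨j, hj, hm, rfl⟩; exact ⟨j, ⟨hj, hm⟩, rfl⟩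

lemma maxAt_iff {w : List ℕ} {I : Finset ℕ} : maxAt w I ↔ I = maxSet w := by
  constructor
  · rintro ⟨h1, h2⟩
    ext i
    rw [mem_maxSet]
    constructor
    · intro hi
      obtain ⟨hi1, hi2⟩ := h1 i hi
      refine ⟨i - 1, by omega, ?_, by omega⟩
      have := (h2 (i - 1) (by omega)).mpr
      have hi' : i - 1 + 1 ∈ I := by rwa [Nat.sub_add_cancel hi1]
      exact (h2 (i - 1) (by omega)).mpr hi'
    · rintro ⟨j, hj, hm, rfl⟩
      exact (h2 j hj).mp hm
  · rintro rfl
    constructor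
    · intro i hi
      rw [mem_maxSet] at hi
      obtain ⟨j, hj, _, rfl⟩ := hi
      omega
    · intro j hj
      constructor
      · intro hm; exact mem_maxSet.mpr ⟨j, hj, hm, rfl⟩
      · intro hm
        obtain ⟨j', hj', hm', he⟩ := mem_maxSet.mp hm
        have : j' = j := by omega
        subst this; exact hm'

lemma maxAt_unique {w : List ℕ} {I J : Finset ℕ} (hI : maxAt w I) (hJ : maxAt w J) : I = J := by
  rw [maxAt_iff] at hI hJ; rw [hI, hJ]

lemma maxSet_nonempty {w : List ℕ} (h : w ≠ []) : (maxSet w).Nonempty := by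
  have hm := wmax_mem h
  obtain ⟨j, hj, he⟩ := List.getElem_of_mem hm
  refine ⟨j + 1, mem_maxSet.mpr ⟨j, hj, ?_, rfl⟩⟩
  rw [List.getD_eq_getElem _ _ hj, he]

lemma maxSet_pos {w : List ℕ} : ∀ i ∈ maxSet w, 0 < i := by
  intro i hi
  obtain ⟨j, _, _, rfl⟩ := mem_maxSet.mp hi
  omega

/-- The packing function. -/
def fpk (w : List ℕ) (a : ℕ) : ℕ := (w.dedup.filter (fun b => b < a)).length + 1

lemma pack_eq_map (w : List ℕ) : pack w = w.map (fpk w) := rfl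

lemma length_pack (w : List ℕ) : (pack w).length = w.length := by
  simp [pack_eq_map]

lemma fpk_card (w : List ℕ) (a : ℕ) :
    fpk w a = (w.toFinset.filter (fun b => b < a)).card + 1 := by
  unfold fpk
  congr 1
lemma fpk_mono (w : List ℕ) {a a' : ℕ} (h : a ≤ a') : fpk w a ≤ fpk w a' := by
  rw [fpk_card, fpk_card]
  have : (w.toFinset.filter (fun b => b < a)) ⊆ (w.toFinset.filter (fun b => b < a')) := by
    intro b hb
    simp only [Finset.mem_filter] at hb ⊢
    exact ⟨hb.1, lt_of_lt_of_le hb.2 h⟩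
  have := Finset.card_le_card this
  omega

lemma fpk_strict (w : List ℕ) {a a' : ℕ} (ha : a ∈ w) (h : a < a') : fpk w a < fpk w a' := by
  rw [fpk_card, fpk_card]
  have hss : (w.toFinset.filter (fun b => b < a)) ⊂ (w.toFinset.filter (fun b => b < a')) := by
    constructor
    · intro b hb
      simp only [Finset.mem_filter] at hb ⊢
      exact ⟨hb.1, lt_trans hb.2 h⟩
    · intro hc
      have : a ∈ (w.toFinset.filter (fun b => b < a')) := by
        simp only [Finset.mem_filter, List.mem_toFinset]
        exact ⟨ha, h⟩
      have := hc this
      simp only [Finset.mem_filter] at this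
      omega
  have := Finset.card_lt_card hss
  omega

lemma fpk_inj (w : List ℕ) {a a' : ℕ} (ha : a ∈ w) (ha' : a' ∈ w) (h : fpk w a = fpk w a') :
    a = a' := by
  rcases lt_trichotomy a a' with hl | he | hl
  · exact absurd h (ne_of_lt (fpk_strict w ha hl))
  · exact he
  · exact absurd h.symm (ne_of_lt (fpk_strict w ha' hl))

lemma wmax_pack (w : List ℕ) (h : w ≠ []) : wmax (pack w) = fpk w (wmax w) := by
  apply wmax_eq
  · rw [pack_eq_map]
    exact List.mem_map_of_mem (wmax_mem h)
  · intro a ha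
    rw [pack_eq_map] at ha
    obtain ⟨b, hb, rfl⟩ := List.mem_map.mp ha
    exact fpk_mono w (le_wmax hb)

lemma getD_pack (w : List ℕ) {j : ℕ} (hj : j < w.length) :
    (pack w).getD j 0 = fpk w (w.getD j 0) := by
  rw [pack_eq_map, List.getD_eq_getElem _ _ (by simpa using hj), List.getD_eq_getElem _ _ hj,
    List.getElem_map]

lemma maxSet_pack (w : List ℕ) : maxSet (pack w) = maxSet w := by
  rcases eq_or_ne w [] with rfl | h
  · rfl
  ext i
  simp only [mem_maxSet, length_pack]
  constructor
  · rintro ⟨j, hj, hm, rfl⟩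
    refine ⟨j, hj, ?_, rfl⟩
    rw [getD_pack w hj, wmax_pack w h] at hm
    exact fpk_inj w (by rw [List.getD_eq_getElem _ _ hj]; exact List.getElem_mem _) (wmax_mem h) hm
  · rintro ⟨j, hj, hm, rfl⟩
    refine ⟨j, hj, ?_, rfl⟩
    rw [getD_pack w hj, wmax_pack w h, hm]
lemma wmax_take {w : List ℕ} {i : ℕ} (h : okL w i) : wmax (w.take i) = wmax w := by
  obtain ⟨h1, h2, hd, hm⟩ := h
  apply le_antisymm
  · exact wmax_le fun a ha => le_wmax (List.mem_of_mem_take ha)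
  · apply le_wmax
    have hw : wmax w ∈ w := wmax_mem (by intro e; rw [e] at h2; simp at h2)
    rcases List.mem_append.mp (by rw [List.take_append_drop i w]; exact hw) with h' | h'
    · exact h'
    · exact absurd h' hm

lemma okL_maxSet {w : List ℕ} {i : ℕ} (h : okL w i) : maxSet (pack (w.take i)) = maxSet w := by
  rw [maxSet_pack]
  obtain ⟨h1, h2, hd, hm⟩ := h
  have hlen : (w.take i).length = i := by rw [List.length_take]; omega
  ext a
  simp only [mem_maxSet, hlen, wmax_take ⟨h1, h2, hd, hm⟩]
  constructor
  · rintro ⟨j, hj, hx, rfl⟩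
    refine ⟨j, by omega, ?_, rfl⟩
    rw [List.getD_eq_getElem _ _ (by omega : j < w.length)]
    rw [List.getD_eq_getElem _ _ (by omega : j < (w.take i).length), List.getElem_take] at hx
    exact hx
  · rintro ⟨j, hj, hx, rfl⟩
    have hji : j < i := by
      by_contra hc
      apply hm
      rw [List.getD_eq_getElem _ _ hj] at hx
      rw [← hx]
      have : w[j] = (w.drop i)[j - i]'(by rw [List.length_drop]; omega) := by
        rw [List.getElem_drop]
        congr 1
        omega
      rw [this]
      exact List.getElem_mem _
    refine ⟨j, hji, ?_, rfl⟩
    rw [List.getD_eq_getElem _ _ (by omega : j < (w.take i).length), List.getElem_take,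
      ← List.getD_eq_getElem _ _ (by omega : j < w.length)]
    exact hx

lemma wmax_drop {w : List ℕ} {i : ℕ} (h : okR w i) : wmax (w.drop i) = wmax w := by
  obtain ⟨h1, h2, hd, hm⟩ := h
  apply le_antisymm
  · exact wmax_le fun a ha => le_wmax (List.mem_of_mem_drop ha)
  · apply le_wmax
    have hw : wmax w ∈ w := wmax_mem (by intro e; rw [e] at h2; simp at h2)
    rcases List.mem_append.mp (by rw [List.take_append_drop i w]; exact hw) with h' | h'
    · exact absurd h' hm
    · exact h'

lemma okR_maxSet {w : List ℕ} {i : ℕ} (h : okR w i) :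
    maxSet (pack (w.drop i)) = (maxSet w).image (· - i) := by
  rw [maxSet_pack]
  obtain ⟨h1, h2, hd, hm⟩ := h
  have hlen : (w.drop i).length = w.length - i := by rw [List.length_drop]
  have key : ∀ j, j < w.length → w.getD j 0 = wmax w → i ≤ j := by
    intro j hj hx
    by_contra hc
    apply hm
    rw [List.getD_eq_getElem _ _ hj] at hx
    rw [← hx]
    have : w[j] = (w.take i)[j]'(by rw [List.length_take]; omega) := (List.getElem_take ..).symm
    rw [this]
    exact List.getElem_mem _
  ext a
  simp only [mem_maxSet, hlen, wmax_drop ⟨h1, h2, hd, hm⟩, Finset.mem_image]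
  constructor
  · rintro ⟨j, hj, hx, rfl⟩
    refine ⟨j + i + 1, ⟨j + i, by omega, ?_, rfl⟩, by omega⟩
    rw [List.getD_eq_getElem _ _ (by omega : j < (w.drop i).length), List.getElem_drop] at hx
    rw [List.getD_eq_getElem _ _ (by omega : j + i < w.length)]
    rw [← hx]
    congr 1
    omega
  · rintro ⟨b, hb, rfl⟩
    obtain ⟨j, hj, hx, rfl⟩ := hb
    have hij := key j hj hx
    refine ⟨j - i, by omega, ?_, by omega⟩
    rw [List.getD_eq_getElem _ _ (by rw [hlen]; omega : j - i < (w.drop i).length),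
      List.getElem_drop, ← List.getD_eq_getElem _ _ (by omega : i + (j - i) < w.length)]
    rw [show i + (j - i) = j by omega]
    exact hx

lemma okR_maxSet_lt {w : List ℕ} {i : ℕ} (h : okR w i) : ∀ a ∈ maxSet w, i < a := by
  obtain ⟨h1, h2, hd, hm⟩ := h
  intro a ha
  obtain ⟨j, hj, hx, rfl⟩ := mem_maxSet.mp ha
  by_contra hc
  apply hm
  rw [List.getD_eq_getElem _ _ hj] at hx
  rw [← hx]
  have : w[j] = (w.take i)[j]'(by rw [List.length_take]; omega) := (List.getElem_take ..).symm
  rw [this]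
  exact List.getElem_mem _

lemma okL_iff {w : List ℕ} {i : ℕ} (h : okL w i) (I : Finset ℕ) :
    maxAt (pack (w.take i)) I ↔ maxAt w I := by
  rw [maxAt_iff, maxAt_iff, okL_maxSet h]

lemma okR_iff {w : List ℕ} {i : ℕ} {I : Finset ℕ} (hI : I.Nonempty) (h : okR w i) :
    (i < I.min' hI ∧ maxAt (pack (w.drop i)) (I.image (· - i))) ↔ maxAt w I := by
  have hne : w ≠ [] := by intro e; rw [e] at h; simp [okR] at h
  have hS : (maxSet w).Nonempty := maxSet_nonempty hne
  have hlt := okR_maxSet_lt h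
  rw [maxAt_iff, maxAt_iff, okR_maxSet h]
  constructor
  · rintro ⟨hmin, himg⟩
    have hIlt : ∀ a ∈ I, i < a := fun a ha => lt_of_lt_of_le hmin (I.min'_le a ha)
    ext a
    constructor
    · intro ha
      have : a - i ∈ (maxSet w).image (· - i) := by
        rw [← himg]; exact Finset.mem_image_of_mem _ ha
      obtain ⟨b, hb, he⟩ := Finset.mem_image.mp this
      have := hlt b hb
      have := hIlt a ha
      have : a = b := by omega
      rwa [this]
    · intro ha
      have : a - i ∈ I.image (· - i) := by
        rw [himg]; exact Finset.mem_image_of_mem _ ha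
      obtain ⟨b, hb, he⟩ := Finset.mem_image.mp this
      have := hlt a ha
      have := hIlt b hb
      have : a = b := by omega
      rw [this]; exact hb
  · rintro rfl
    refine ⟨?_, rfl⟩
    exact hlt _ (Finset.min'_mem _ hI)
noncomputable def lenP (n : ℕ) : V →ₗ[ℚ] V :=
  Finsupp.lsum ℚ fun w => LinearMap.toSpanSingleton ℚ V (if w.length = n then Rw w else 0)

lemma tauI_single (I : Finset ℕ) (w : List ℕ) (c : ℚ) :
    tauI I (Finsupp.single w c) = c • (if maxAt w I then Rw w else 0) := by
  simp [tauI, LinearMap.toSpanSingleton_apply]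

lemma lenP_single (n : ℕ) (w : List ℕ) (c : ℚ) :
    lenP n (Finsupp.single w c) = c • (if w.length = n then Rw w else 0) := by
  simp [lenP, LinearMap.toSpanSingleton_apply]

lemma deltaL_single (w : List ℕ) (c : ℚ) :
    deltaL (Finsupp.single w c) = c • cutsL w := by
  simp [deltaL, LinearMap.toSpanSingleton_apply]

lemma deltaR_single (w : List ℕ) (c : ℚ) :
    deltaR (Finsupp.single w c) = c • cutsR w := by
  simp [deltaR, LinearMap.toSpanSingleton_apply]

lemma tauI_idem (I : Finset ℕ) : (tauI I) ∘ₗ (tauI I) = tauI I := by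
  apply Finsupp.lhom_ext
  intro w c
  simp only [LinearMap.comp_apply, tauI_single]
  split_ifs with h
  · rw [Rw, map_smul, tauI_single, if_pos h, one_smul]; rfl
  · simp
lemma commL (I : Finset ℕ) :
    deltaL ∘ₗ tauI I = (TensorProduct.map (tauI I) LinearMap.id) ∘ₗ deltaL := by
  apply Finsupp.lhom_ext
  intro w c
  simp only [LinearMap.comp_apply]
  rw [tauI_single, deltaL_single, map_smul, map_smul]
  congr 1
  by_cases h : maxAt w I
  · rw [if_pos h, Rw, deltaL_single, one_smul]
    unfold cutsL
    rw [map_list_sum, List.map_map]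
    apply congrArg
    symm
    apply List.map_congr_left
    intro i hi
    have hok : okL w i := of_decide_eq_true (List.mem_filter.mp hi).2
    simp only [Function.comp, TensorProduct.map_tmul, LinearMap.id_apply]
    rw [Rw, tauI_single, if_pos ((okL_iff hok I).mpr h), one_smul]; rfl
  · rw [if_neg h, map_zero]
    symm
    unfold cutsL
    rw [map_list_sum, List.map_map]
    apply List.sum_eq_zero
    intro x hx
    obtain ⟨i, hi, rfl⟩ := List.mem_map.mp hx
    have hok : okL w i := of_decide_eq_true (List.mem_filter.mp hi).2
    simp only [Function.comp, TensorProduct.map_tmul, LinearMap.id_apply]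
    rw [Rw, tauI_single, if_neg (fun hc => h ((okL_iff hok I).mp hc)), smul_zero,
      TensorProduct.zero_tmul]

lemma finset_sum_list_sum {α β M : Type*} [AddCommMonoid M] (s : Finset β) (l : List α)
    (g : β → α → M) :
    ∑ n ∈ s, (l.map (g n)).sum = (l.map (fun a => ∑ n ∈ s, g n a)).sum := by
  induction l with
  | nil => simp
  | cons a t ih => simp [Finset.sum_add_distrib, ih]

lemma commR (I : Finset ℕ) (hI : I.Nonempty) :
    deltaR ∘ₗ tauI I =
      (∑ n ∈ Finset.Ico 1 (I.min' hI),
        TensorProduct.map (lenP n) (tauI (I.image (· - n)))) ∘ₗ deltaR := by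
  apply Finsupp.lhom_ext
  intro w c
  simp only [LinearMap.comp_apply]
  rw [tauI_single, deltaR_single, map_smul, map_smul]
  congr 1
  have key : ∀ i, okR w i →
      (∑ n ∈ Finset.Ico 1 (I.min' hI),
        TensorProduct.map (lenP n) (tauI (I.image (· - n))))
          (Rw (pack (w.take i)) ⊗ₜ[ℚ] Rw (pack (w.drop i)))
      = if maxAt w I then Rw (pack (w.take i)) ⊗ₜ[ℚ] Rw (pack (w.drop i)) else 0 := by
    intro i hok
    rw [LinearMap.sum_apply]
    have hlen : (pack (w.take i)).length = i := by
      rw [length_pack, List.length_take]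
      have := hok.2.1
      omega
    have step : ∀ n, TensorProduct.map (lenP n) (tauI (I.image (· - n)))
          (Rw (pack (w.take i)) ⊗ₜ[ℚ] Rw (pack (w.drop i)))
        = if n = i then
            (if maxAt (pack (w.drop i)) (I.image (· - i)) then
              Rw (pack (w.take i)) ⊗ₜ[ℚ] Rw (pack (w.drop i)) else 0) else 0 := by
      intro n
      rw [TensorProduct.map_tmul]
      rw [Rw, Rw, lenP_single, tauI_single, one_smul, one_smul, hlen]
      by_cases hn : n = i
      · subst hn
        rw [if_pos rfl, if_pos rfl]
        by_cases hm : maxAt (pack (w.drop n)) (I.image (· - n))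
        · rw [if_pos hm, if_pos hm]; rfl
        · rw [if_neg hm, if_neg hm, TensorProduct.tmul_zero]
      · rw [if_neg (fun hc => hn hc.symm), if_neg hn, TensorProduct.zero_tmul]
    rw [Finset.sum_congr rfl (fun n _ => step n), Finset.sum_ite_eq' (Finset.Ico 1 (I.min' hI))]
    simp only [Finset.mem_Ico]
    by_cases h : maxAt w I
    · rw [if_pos h]
      have := (okR_iff hI hok).mpr h
      rw [if_pos ⟨hok.1, this.1⟩, if_pos this.2]
    · rw [if_neg h]
      by_cases h1 : 1 ≤ i ∧ i < I.min' hI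
      · rw [if_pos h1]
        rw [if_neg (fun hc => h ((okR_iff hI hok).mp ⟨h1.2, hc⟩))]
      · rw [if_neg h1]
  by_cases h : maxAt w I
  · rw [if_pos h, Rw, deltaR_single, one_smul]
    unfold cutsR
    rw [map_list_sum, List.map_map]
    apply congrArg
    symm
    apply List.map_congr_left
    intro i hi
    have hok : okR w i := of_decide_eq_true (List.mem_filter.mp hi).2
    simp only [Function.comp]
    rw [key i hok, if_pos h]
  · rw [if_neg h, map_zero]
    symm
    unfold cutsR
    rw [map_list_sum, List.map_map]
    apply List.sum_eq_zero
    intro x hx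
    obtain ⟨i, hi, rfl⟩ := List.mem_map.mp hx
    have hok : okR w i := of_decide_eq_true (List.mem_filter.mp hi).2
    simp only [Function.comp]
    rw [key i hok, if_neg h]
lemma Wplus_eq : Wplus = Finsupp.supported ℚ ℚ {w | IsPacked w ∧ w ≠ []} := by
  rw [Finsupp.supported_eq_span_single]
  unfold Wplus
  congr 1
  ext x
  constructor
  · rintro ⟨w, h1, h2, rfl⟩
    exact ⟨w, ⟨h1, h2⟩, rfl⟩
  · rintro ⟨w, ⟨h1, h2⟩, rfl⟩
    exact ⟨w, h1, h2, rfl⟩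

lemma tauI_apply (I : Finset ℕ) (x : V) :
    tauI I x = ∑ w ∈ x.support, x w • (if maxAt w I then Rw w else 0) := by
  rw [tauI, Finsupp.lsum_apply]
  rfl

lemma tauI_mem_supported (I : Finset ℕ) {s : Set (List ℕ)} {x : V}
    (hx : x ∈ Finsupp.supported ℚ ℚ s) : tauI I x ∈ Finsupp.supported ℚ ℚ s := by
  rw [tauI_apply]
  apply Submodule.sum_mem
  intro w hw
  apply Submodule.smul_mem
  split_ifs
  · exact Finsupp.single_mem_supported ℚ 1 (hx hw)
  · exact Submodule.zero_mem _

lemma tauI_mem_supported_maxAt (I : Finset ℕ) (x : V) :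
    tauI I x ∈ Finsupp.supported ℚ ℚ {w | maxAt w I} := by
  rw [tauI_apply]
  apply Submodule.sum_mem
  intro w _
  apply Submodule.smul_mem
  split_ifs with h
  · exact Finsupp.single_mem_supported ℚ 1 h
  · exact Submodule.zero_mem _

lemma tauI_Wplus (I : Finset ℕ) {x : V} (hx : x ∈ Wplus) : tauI I x ∈ Wplus := by
  rw [Wplus_eq] at hx ⊢
  exact tauI_mem_supported I hx

lemma mem_TPrim {x : V} : x ∈ TPrim ↔ x ∈ Wplus ∧ deltaL x = 0 ∧ deltaR x = 0 := by
  rw [TPrim, Submodule.mem_inf, Submodule.mem_inf, LinearMap.mem_ker, LinearMap.mem_ker,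
    and_assoc]

lemma tauI_TPrim (I : Finset ℕ) (hI : I.Nonempty) {x : V} (hx : x ∈ TPrim) :
    tauI I x ∈ TPrim := by
  rw [mem_TPrim] at hx ⊢
  obtain ⟨hW, hL, hR⟩ := hx
  refine ⟨tauI_Wplus I hW, ?_, ?_⟩
  · have := LinearMap.congr_fun (commL I) x
    simp only [LinearMap.comp_apply] at this
    rw [this, hL, map_zero]
  · have := LinearMap.congr_fun (commR I hI) x
    simp only [LinearMap.comp_apply] at this
    rw [this, hR, map_zero]

lemma sum_tauI (x : V) (T : Finset (Finset ℕ)) (hT : ∀ w ∈ x.support, maxSet w ∈ T) :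
    ∑ s ∈ T, tauI s x = x := by
  simp only [tauI_apply]
  rw [Finset.sum_comm]
  have key : ∀ w ∈ x.support,
      ∑ s ∈ T, x w • (if maxAt w s then Rw w else 0) = Finsupp.single w (x w) := by
    intro w hw
    have h1 : ∀ s ∈ T, x w • (if maxAt w s then Rw w else 0)
        = if s = maxSet w then x w • Rw w else 0 := by
      intro s _
      by_cases h : maxAt w s
      · rw [if_pos h, if_pos (maxAt_iff.mp h)]
      · rw [if_neg h, if_neg (fun hc => h (maxAt_iff.mpr hc)), smul_zero]
    rw [Finset.sum_congr rfl h1, Finset.sum_ite_eq' T (maxSet w), if_pos (hT w hw)]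
    rw [Rw, Finsupp.smul_single, smul_eq_mul, mul_one]
  rw [Finset.sum_congr rfl key]
  exact x.sum_single
theorem TPrim_direct_sum_decomposition :
    (∀ I : Finset ℕ, I.Nonempty → (∀ i ∈ I, 0 < i) →
      Submodule.map (tauI I) TPrim = Submodule.map (tauI I) Wplus ⊓ TPrim) ∧
    iSupIndep (fun I : PosFinset => Submodule.map (tauI I.1) Wplus ⊓ TPrim) ∧
    (⨆ I : PosFinset, Submodule.map (tauI I.1) Wplus ⊓ TPrim) = TPrim := by
  have hTW : TPrim ≤ Wplus := le_trans inf_le_left inf_le_left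
  refine ⟨?_, ?_, ?_⟩
  · intro I hne _
    apply le_antisymm
    · apply le_inf
      · exact Submodule.map_mono hTW
      · rintro y ⟨x, hx, rfl⟩
        exact tauI_TPrim I hne hx
    · rintro y ⟨⟨x, hxW, rfl⟩, hT⟩
      exact ⟨tauI I x, hT, LinearMap.congr_fun (tauI_idem I) x⟩
  · have hN : iSupIndep (fun I : PosFinset =>
        Finsupp.supported ℚ ℚ {w : List ℕ | maxAt w I.1}) := by
      intro I
      have hle : (⨆ J, ⨆ _ : J ≠ I, Finsupp.supported ℚ ℚ {w : List ℕ | maxAt w J.1}) ≤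
          Finsupp.supported ℚ ℚ {w : List ℕ | ∃ J : PosFinset, J ≠ I ∧ maxAt w J.1} := by
        apply iSup₂_le
        intro J hJ
        apply Finsupp.supported_mono
        intro w hw
        exact ⟨J, hJ, hw⟩
      refine Disjoint.mono_right hle (Finsupp.disjoint_supported_supported
        (Set.disjoint_left.mpr ?_))
      rintro w h1 ⟨J, hJ, h2⟩
      exact hJ (Subtype.ext (maxAt_unique h2 h1))
    apply hN.mono
    intro I
    refine le_trans inf_le_left ?_
    rintro y ⟨x, _, rfl⟩
    exact tauI_mem_supported_maxAt I.1 x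
  · apply le_antisymm
    · apply iSup_le
      intro I
      exact inf_le_right
    · intro x hx
      have hxW : (x.support : Set (List ℕ)) ⊆ {w | IsPacked w ∧ w ≠ []} := by
        have := hTW hx
        rwa [Wplus_eq, Finsupp.mem_supported] at this
      rw [← sum_tauI x (x.support.image maxSet) (fun w hw => Finset.mem_image_of_mem _ hw)]
      apply Submodule.sum_mem
      intro s hs
      obtain ⟨w, hw, rfl⟩ := Finset.mem_image.mp hs
      obtain ⟨hp, hne⟩ := hxW hw
      have hMne : (maxSet w).Nonempty := maxSet_nonempty hne
      refine Submodule.mem_iSup_of_mem (⟨maxSet w, hMne, maxSet_pos⟩ : PosFinset) ?_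
      exact ⟨⟨x, hTW hx, rfl⟩, tauI_TPrim _ hMne hx⟩
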